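/- The fingerprinting lemma for bounded bias: for every function f : {−1,1}^n → [−1/3, 1/3], if P is drawn uniformly from [−1/3, 1/3] and X₁,…,X_n are drawn i.i.d. from the ±1-valued distribution with mean P, then E[ ((1/9 − P²)/(1 − P²)) · (f(X) − P) · Σ_{i=1}^n (X_i − P) + (f(X) − P)² ] ≥ 1/27. -/

import Mathlib

open MeasureTheory

/-- The `±1` value encoded by a boolean. -/
noncomputable def pmSign (b : Bool) : ℝ := if b then 1 else -1

/-- The probability mass function of the `{−1,1}`-valued distribution with mean `p`,
where `b = true` encodes `+1`. -/
noncomputable def berPM (p : ℝ) (b : Bool) : ℝ := if b then (1 + p) / 2 else (1 - p) / 2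

namespace FPAux

lemma continuous_berPM (b : Bool) : Continuous (fun p : ℝ => berPM p b) := by
  cases b
  · exact (show Continuous fun p : ℝ => (1 - p) / 2 by fun_prop)
  · exact (show Continuous fun p : ℝ => (1 + p) / 2 by fun_prop)

lemma berPM_nonneg {p : ℝ} (hp : p ∈ Set.Icc (-(1/3) : ℝ) (1/3)) (b : Bool) :
    0 ≤ berPM p b := by
  obtain ⟨h1, h2⟩ := hp
  cases b
  · exact (show (0:ℝ) ≤ (1 - p) / 2 by linarith)
  · exact (show (0:ℝ) ≤ (1 + p) / 2 by linarith)

lemma hasDerivAt_berPM (b : Bool) (p : ℝ) :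
    HasDerivAt (fun p => berPM p b) (pmSign b / 2) p := by
  cases b
  · have h := ((hasDerivAt_id p).const_sub (1 : ℝ)).div_const 2
    exact h.congr_deriv (by norm_num [pmSign])
  · have h := ((hasDerivAt_id p).const_add (1 : ℝ)).div_const 2
    exact h.congr_deriv (by norm_num [pmSign])

lemma berPM_mul_sign (p : ℝ) (b : Bool) :
    berPM p b * (pmSign b - p) = (1 - p^2) * (pmSign b / 2) := by
  cases b <;> simp [berPM, pmSign] <;> ring

variable {n : ℕ}

/-- Derivative of the product weight. -/
noncomputable def D (x : Fin n → Bool) (p : ℝ) : ℝ :=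
  ∑ i, (∏ j ∈ Finset.univ.erase i, berPM p (x j)) * (pmSign (x i) / 2)

lemma continuous_D (x : Fin n → Bool) : Continuous (fun p => D x p) := by
  apply continuous_finset_sum
  intro i _
  exact (continuous_finset_prod _ fun j _ => continuous_berPM (x j)).mul continuous_const

lemma hasDerivAt_prodBer (x : Fin n → Bool) (p : ℝ) :
    HasDerivAt (fun p => ∏ i, berPM p (x i)) (D x p) p := by
  have h := HasDerivAt.fun_finsetProd (u := Finset.univ)
    (f := fun i p => berPM p (x i)) (f' := fun i => pmSign (x i) / 2) (x := p)
    (fun i _ => hasDerivAt_berPM (x i) p)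
  simpa [D, smul_eq_mul] using h

lemma sum_prodBer (p : ℝ) : ∑ x : Fin n → Bool, ∏ i, berPM p (x i) = 1 := by
  classical
  rw [← Fintype.piFinset_univ, ← Finset.prod_univ_sum]
  apply Finset.prod_eq_one
  intro i _
  simp [berPM]
  ring

lemma sum_D (p : ℝ) : ∑ x : Fin n → Bool, D x p = 0 := by
  have h1 : HasDerivAt (fun p : ℝ => ∑ x : Fin n → Bool, ∏ i, berPM p (x i))
      (∑ x : Fin n → Bool, D x p) p :=
    HasDerivAt.fun_sum fun x _ => hasDerivAt_prodBer x p
  have h2 : (fun p : ℝ => ∑ x : Fin n → Bool, ∏ i, berPM p (x i)) = fun _ => (1 : ℝ) :=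
    funext sum_prodBer
  rw [h2] at h1
  exact ((hasDerivAt_const p (1 : ℝ)).unique h1).symm

lemma prod_mul_sumSign (x : Fin n → Bool) (p : ℝ) :
    (∏ i, berPM p (x i)) * (∑ i, (pmSign (x i) - p)) = (1 - p^2) * D x p := by
  rw [Finset.mul_sum, D, Finset.mul_sum]
  apply Finset.sum_congr rfl
  intro i _
  rw [← Finset.mul_prod_erase Finset.univ _ (Finset.mem_univ i)]
  linear_combination (∏ j ∈ Finset.univ.erase i, berPM p (x j)) * berPM_mul_sign p (x i)

variable (f : (Fin n → Bool) → ℝ)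

noncomputable def gf (p : ℝ) : ℝ := ∑ x : Fin n → Bool, (∏ i, berPM p (x i)) * f x

noncomputable def gf' (p : ℝ) : ℝ := ∑ x : Fin n → Bool, D x p * f x

lemma continuous_gf : Continuous (gf f) :=
  continuous_finset_sum _ fun x _ =>
    (continuous_finset_prod _ fun i _ => continuous_berPM (x i)).mul continuous_const

lemma continuous_gf' : Continuous (gf' f) :=
  continuous_finset_sum _ fun x _ => (continuous_D x).mul continuous_const

lemma hasDerivAt_gf (p : ℝ) : HasDerivAt (gf f) (gf' f p) p := by
  unfold gf gf'
  exact HasDerivAt.fun_sum fun x _ => (hasDerivAt_prodBer x p).mul_const (f x)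

/-- `G p = (1/9 - p²)·g(p)`. -/
noncomputable def G (p : ℝ) : ℝ := (1/9 - p^2) * gf f p

/-- `G' p`, the derivative of `G`. -/
noncomputable def G' (p : ℝ) : ℝ := (1/9 - p^2) * gf' f p - 2 * p * gf f p

lemma continuous_G' : Continuous (G' f) := by
  unfold G'
  exact ((by fun_prop : Continuous fun p : ℝ => (1/9 - p^2)).mul (continuous_gf' f)).sub
    ((by fun_prop : Continuous fun p : ℝ => 2 * p).mul (continuous_gf f))

lemma hasDerivAt_G (p : ℝ) : HasDerivAt (G f) (G' f p) p := by
  have h1 : HasDerivAt (fun p : ℝ => 1/9 - p^2) (-(2 * p)) p := by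
    simpa using (hasDerivAt_pow 2 p).const_sub (1/9 : ℝ)
  have h := h1.mul (hasDerivAt_gf f p)
  unfold G G'
  refine h.congr_deriv ?_
  ring

/-- The clean (division-free) form of the inner expectation. -/
noncomputable def q (p : ℝ) : ℝ :=
  ∑ x : Fin n → Bool,
    ((1/9 - p^2) * (D x p * (f x - p)) + (∏ i, berPM p (x i)) * (f x - p)^2)

lemma continuous_q : Continuous (q f) := by
  apply continuous_finset_sum
  intro x _
  apply Continuous.add
  · exact (by fun_prop : Continuous fun p : ℝ => (1/9 - p^2)).mul
      ((continuous_D x).mul (by fun_prop))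
  · exact (continuous_finset_prod _ fun i _ => continuous_berPM (x i)).mul (by fun_prop)

lemma inner_eq_q {p : ℝ} (hp : p ∈ Set.Icc (-(1/3) : ℝ) (1/3)) :
    ∑ x : Fin n → Bool, (∏ i, berPM p (x i)) *
        (((1/9 - p^2) / (1 - p^2)) * (f x - p) * (∑ i, (pmSign (x i) - p))
          + (f x - p)^2) = q f p := by
  obtain ⟨h1, h2⟩ := hp
  have hne : (1 : ℝ) - p^2 ≠ 0 := by nlinarith
  unfold q
  apply Finset.sum_congr rfl
  intro x _
  have hS := prod_mul_sumSign x p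
  have hc : (1/9 - p^2) / (1 - p^2) * (1 - p^2) = 1/9 - p^2 := div_mul_cancel₀ _ hne
  linear_combination ((1/9 - p^2) / (1 - p^2) * (f x - p)) * hS
    + (D x p * (f x - p)) * hc

lemma q_eq (p : ℝ) :
    q f p = (1/9 - p^2) * gf' f p
      + ∑ x : Fin n → Bool, (∏ i, berPM p (x i)) * (f x - p)^2 := by
  unfold q gf'
  rw [Finset.sum_add_distrib]
  congr 1
  rw [Finset.mul_sum]
  have : ∑ x : Fin n → Bool, (1/9 - p^2) * (D x p * (f x - p))
      = ∑ x : Fin n → Bool, ((1/9 - p^2) * (D x p * f x) - (1/9 - p^2) * p * D x p) := by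
    apply Finset.sum_congr rfl; intro x _; ring
  have h2 : ∑ x : Fin n → Bool, (1/9 - p^2) * p * D x p
      = (1/9 - p^2) * p * ∑ x : Fin n → Bool, D x p := by rw [Finset.mul_sum]
  rw [this, Finset.sum_sub_distrib, h2, sum_D]
  simp only [mul_zero, sub_zero]

lemma jensen {p : ℝ} (hp : p ∈ Set.Icc (-(1/3) : ℝ) (1/3)) :
    (gf f p - p)^2 ≤ ∑ x : Fin n → Bool, (∏ i, berPM p (x i)) * (f x - p)^2 := by
  classical
  set w : (Fin n → Bool) → ℝ := fun x => ∏ i, berPM p (x i) with hw_def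
  have hw : ∀ x, 0 ≤ w x := fun x => Finset.prod_nonneg fun i _ => berPM_nonneg hp (x i)
  have h1 : gf f p - p = ∑ x : Fin n → Bool, w x * (f x - p) := by
    unfold gf
    simp only [mul_sub]
    rw [Finset.sum_sub_distrib, ← Finset.sum_mul, sum_prodBer]
    ring
  have h2 := Finset.sum_mul_sq_le_sq_mul_sq Finset.univ
    (fun x : Fin n → Bool => Real.sqrt (w x))
    (fun x : Fin n → Bool => Real.sqrt (w x) * (f x - p))
  have e1 : ∀ x : Fin n → Bool,
      Real.sqrt (w x) * (Real.sqrt (w x) * (f x - p)) = w x * (f x - p) := fun x => by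
    rw [← mul_assoc, Real.mul_self_sqrt (hw x)]
  have e2 : ∀ x : Fin n → Bool, (Real.sqrt (w x))^2 = w x := fun x => Real.sq_sqrt (hw x)
  have e3 : ∀ x : Fin n → Bool,
      (Real.sqrt (w x) * (f x - p))^2 = w x * (f x - p)^2 := fun x => by
    rw [mul_pow, e2]
  rw [Finset.sum_congr rfl (fun x _ => e1 x), Finset.sum_congr rfl (fun x _ => e2 x),
    Finset.sum_congr rfl (fun x _ => e3 x)] at h2
  have hsum : ∑ x : Fin n → Bool, w x = 1 := sum_prodBer p
  rw [hsum, one_mul] at h2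
  rw [h1]
  exact h2

lemma pointwise_bound {p : ℝ} (hp : p ∈ Set.Icc (-(1/3) : ℝ) (1/3)) :
    G' f p + p^2 ≤ q f p := by
  have hJ := jensen f hp
  have hq := q_eq f p
  unfold G'
  nlinarith [sq_nonneg (gf f p)]

end FPAux

open FPAux in
/-- Fingerprinting lemma: for any `f : {−1,1}ⁿ → [−1/3, 1/3]`, with `P` uniform on
`[−1/3,1/3]` and `X₁,…,Xₙ` i.i.d. `±1`-valued with mean `P`,
`E[ ((1/9 − P²)/(1 − P²))·(f(X) − P)·Σᵢ(Xᵢ − P) + (f(X) − P)² ] ≥ 1/27`.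
The expectation over `P` is written as an integral against the uniform density `3/2`
on `[−1/3,1/3]`, and the expectation over `X` as a sum over `{−1,1}ⁿ`. -/
theorem stmt_7 (n : ℕ) (f : (Fin n → Bool) → ℝ)
    (hf : ∀ x, f x ∈ Set.Icc (-(1/3) : ℝ) (1/3)) :
    (3/2) * ∫ p in Set.Icc (-(1/3) : ℝ) (1/3),
      ∑ x : Fin n → Bool, (∏ i, berPM p (x i)) *
        (((1/9 - p^2) / (1 - p^2)) * (f x - p) * (∑ i, (pmSign (x i) - p))
          + (f x - p)^2)
      ≥ 1/27 := by
  have hab : (-(1/3) : ℝ) ≤ 1/3 := by norm_num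
  -- replace integrand by q on the set
  have hcongr : ∫ p in Set.Icc (-(1/3) : ℝ) (1/3),
      ∑ x : Fin n → Bool, (∏ i, berPM p (x i)) *
        (((1/9 - p^2) / (1 - p^2)) * (f x - p) * (∑ i, (pmSign (x i) - p))
          + (f x - p)^2)
      = ∫ p in Set.Icc (-(1/3) : ℝ) (1/3), q f p := by
    apply setIntegral_congr_fun measurableSet_Icc
    intro p hp
    exact inner_eq_q f hp
  have hGi : IntegrableOn (G' f) (Set.Icc (-(1/3) : ℝ) (1/3)) volume :=
    (continuous_G' f).integrableOn_Icc
  have hsqi : IntegrableOn (fun p : ℝ => p^2) (Set.Icc (-(1/3) : ℝ) (1/3)) volume :=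
    (by fun_prop : Continuous fun p : ℝ => p^2).integrableOn_Icc
  have hqi : IntegrableOn (q f) (Set.Icc (-(1/3) : ℝ) (1/3)) volume :=
    (continuous_q f).integrableOn_Icc
  -- lower bound integral by ∫ (G' + p²)
  have hmono : ∫ p in Set.Icc (-(1/3) : ℝ) (1/3), (G' f p + p^2)
      ≤ ∫ p in Set.Icc (-(1/3) : ℝ) (1/3), q f p := by
    apply setIntegral_mono_on (hGi.add hsqi) hqi measurableSet_Icc
    intro p hp
    exact pointwise_bound f hp
  have hsplit : ∫ p in Set.Icc (-(1/3) : ℝ) (1/3), (G' f p + p^2)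
      = (∫ p in Set.Icc (-(1/3) : ℝ) (1/3), G' f p)
        + ∫ p in Set.Icc (-(1/3) : ℝ) (1/3), p^2 :=
    integral_add hGi hsqi
  have hG0 : ∫ p in Set.Icc (-(1/3) : ℝ) (1/3), G' f p = 0 := by
    rw [integral_Icc_eq_integral_Ioc, ← intervalIntegral.integral_of_le hab]
    rw [intervalIntegral.integral_eq_sub_of_hasDerivAt
      (fun p _ => hasDerivAt_G f p) ((continuous_G' f).intervalIntegrable _ _)]
    unfold FPAux.G
    norm_num
  have hsq : ∫ p in Set.Icc (-(1/3) : ℝ) (1/3), p^2 = 2/81 := by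
    rw [integral_Icc_eq_integral_Ioc, ← intervalIntegral.integral_of_le hab,
      integral_pow]
    norm_num
  rw [ge_iff_le, hcongr]
  have : (2/81 : ℝ) ≤ ∫ p in Set.Icc (-(1/3) : ℝ) (1/3), q f p := by
    rw [← hsq]
    calc (∫ p in Set.Icc (-(1/3) : ℝ) (1/3), p^2)
        = 0 + ∫ p in Set.Icc (-(1/3) : ℝ) (1/3), p^2 := by ring
      _ = ∫ p in Set.Icc (-(1/3) : ℝ) (1/3), (G' f p + p^2) := by rw [hsplit, hG0]
      _ ≤ _ := hmono
  linarith
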